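/- arXiv:1507.00979 — 3 statements merged into one kernel-verified Lean document; each statement's English description precedes it below -/
import Mathlib

section
/- For every q > 0, sup_{x∈ℝ} |Φ(qx) − Φ(x)| ≤ (1/√(2πe))·(max{q, 1/q} − 1); moreover, for q ≠ 1 the supremum equals |Φ(q t_q) − Φ(t_q)| where t_q = √(ln q² / (q² − 1)), and it is bounded by √((q−1) ln q / (π(q+1))) · exp{−min(1,q)·ln q/(q²−1)}. -/
open MeasureTheory ProbabilityTheory Real

/-- The standard normal distribution function Φ. -/
noncomputable def stdNormalCDF (x : ℝ) : ℝ :=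
  (Real.sqrt (2 * Real.pi))⁻¹ * ∫ z in Set.Iic x, Real.exp (-z ^ 2 / 2)

section SupCDFAux

open Set

noncomputable def gs (x : ℝ) : ℝ := Real.exp (-x ^ 2 / 2)

lemma gs_pos (x : ℝ) : 0 < gs x := Real.exp_pos _
lemma gs_cont : Continuous gs := by
  unfold gs; continuity

lemma gs_integrable : Integrable gs := by
  have h := integrable_exp_neg_mul_sq (b := (2:ℝ)⁻¹) (by norm_num)
  convert h using 2 with x
  unfold gs; ring_nf

lemma gs_even (x : ℝ) : gs (-x) = gs x := by unfold gs; ring_nf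

lemma gs_anti {x y : ℝ} (hx : 0 ≤ x) (hxy : x ≤ y) : gs y ≤ gs x := by
  unfold gs
  apply Real.exp_le_exp.2
  nlinarith

lemma cdf_sub (a b : ℝ) :
    stdNormalCDF b - stdNormalCDF a = (Real.sqrt (2 * Real.pi))⁻¹ * ∫ x in a..b, gs x := by
  unfold stdNormalCDF
  rw [← mul_sub]
  congr 1
  exact intervalIntegral.integral_Iic_sub_Iic gs_integrable.integrableOn gs_integrable.integrableOn


lemma albe {α β : ℝ} (ha : 0 ≤ α) (hb : 0 ≤ β) (h : 2*α*β ≤ α - β) :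
    β * (Real.exp β - 1) ≤ α * (1 - Real.exp (-α)) := by
  have hba : β ≤ α := by nlinarith
  have hb1 : β < 1 := by nlinarith
  have h1 : Real.exp β - 1 ≤ β / (1 - β) := by
    have h2 : 1 - β ≤ Real.exp (-β) := by
      have := Real.add_one_le_exp (-β); linarith
    have h3 : (1 - β) * Real.exp β ≤ 1 := by
      calc (1 - β) * Real.exp β ≤ Real.exp (-β) * Real.exp β := by
            apply mul_le_mul_of_nonneg_right h2 (Real.exp_pos β).le
        _ = 1 := by rw [← Real.exp_add]; simp
    rw [le_div_iff₀ (by linarith : (0:ℝ) < 1 - β)]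
    nlinarith
  have h2 : α / (1 + α) ≤ 1 - Real.exp (-α) := by
    have h3 : Real.exp (-α) * (1 + α) ≤ 1 := by
      have h5 := Real.add_one_le_exp α
      have h6 := Real.exp_pos (-α)
      have h7 : Real.exp (-α) * Real.exp α = 1 := by rw [← Real.exp_add]; simp
      nlinarith
    rw [div_le_iff₀ (by linarith : (0:ℝ) < 1 + α)]
    nlinarith
  have key : β * (β / (1 - β)) ≤ α * (α / (1 + α)) := by
    rw [mul_div_assoc', mul_div_assoc',
      div_le_div_iff₀ (by linarith : (0:ℝ) < 1 - β) (by linarith : (0:ℝ) < 1 + α)]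
    nlinarith
  calc β * (Real.exp β - 1) ≤ β * (β / (1 - β)) := mul_le_mul_of_nonneg_left h1 hb
    _ ≤ α * (α / (1 + α)) := key
    _ ≤ α * (1 - Real.exp (-α)) := mul_le_mul_of_nonneg_left h2 ha

-- ab ≤ 1 under balance condition
lemma ab_le_one {a b : ℝ} (ha : 0 < a) (hab : a < b) (hcond : a * gs a = b * gs b) :
    a * b ≤ 1 := by
  have hb : 0 < b := lt_trans ha hab
  have hL : Real.log b - Real.log a = (b^2 - a^2)/2 := by
    have := congrArg Real.log hcond
    rw [Real.log_mul ha.ne' (gs_pos a).ne', Real.log_mul hb.ne' (gs_pos b).ne'] at this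
    unfold gs at this
    rw [Real.log_exp, Real.log_exp] at this
    linarith
  set L := Real.log b - Real.log a with hLdef
  have hL0 : 0 < L := by
    have := Real.log_lt_log ha hab; simp [hLdef]; linarith
  have hsinh : Real.sinh L = (b/a - a/b)/2 := by
    rw [Real.sinh_eq]
    rw [show L = Real.log (b/a) by rw [Real.log_div hb.ne' ha.ne']]
    rw [Real.exp_log (by positivity), ← Real.log_inv, Real.exp_log (by positivity)]
    congr 1
    field_simp
  have hls := (Real.self_le_sinh_iff.mpr hL0.le)
  rw [hsinh] at hls
  -- L = (b²−a²)/2 ≤ (b/a − a/b)/2 = (b²−a²)/(2ab)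
  rw [hL] at hls
  have h1 : (b/a - a/b) = (b^2-a^2)/(a*b) := by field_simp
  rw [h1] at hls
  have h2 : 0 < b^2 - a^2 := by nlinarith
  have h3 : 0 < a*b := by positivity
  have h5 : (b^2 - a^2)/(a*b) * (a*b) = b^2 - a^2 := div_mul_cancel₀ _ h3.ne'
  nlinarith [mul_le_mul_of_nonneg_right hls h3.le, h5]

lemma pw {c y : ℝ} (hc0 : 0 < c) (hc1 : c ≤ 1) (hy : Real.sqrt c ≤ y) :
    gs y + c/y^2 * gs (c/y) ≤ (1 + c/y^2) * Real.exp (-c/2) := by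
  have hy0 : 0 < y := lt_of_lt_of_le (Real.sqrt_pos.mpr hc0) hy
  have hcy : c ≤ y^2 := by
    nlinarith [Real.sq_sqrt hc0.le, Real.sqrt_nonneg c, mul_self_le_mul_self (Real.sqrt_nonneg c) hy]
  set α := (y^2 - c)/2 with hα
  set β := (c*y^2 - c^2)/(2*y^2) with hβ
  have hαn : 0 ≤ α := by simp [hα]; linarith
  have hβn : 0 ≤ β := by
    apply div_nonneg _ (by positivity)
    nlinarith
  have hid1 : β = α * (c/y^2) := by rw [hβ, hα]; field_simp
  have hsub : 2*α*β ≤ α - β := by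
    have hd : α - β = (y^2-c)^2/(2*y^2) := by rw [hα, hβ]; field_simp
    have hp : 2*α*β = c * ((y^2-c)^2/(2*y^2)) := by rw [hα, hβ]; field_simp
    rw [hd, hp]
    have hX : 0 ≤ (y^2-c)^2/(2*y^2) := by positivity
    nlinarith [hX]
  have key := albe hαn hβn hsub
  have e1 : gs y = Real.exp (-c/2) * Real.exp (-α) := by
    unfold gs; rw [← Real.exp_add]; congr 1; field_simp [hα]; ring
  have e2 : gs (c/y) = Real.exp (-c/2) * Real.exp β := by
    unfold gs; rw [← Real.exp_add]; congr 1; rw [hβ]; field_simp; ring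
  rw [e1, e2]
  have hexp := Real.exp_pos (-c/2)
  rw [show c/y^2 * (Real.exp (-c/2) * Real.exp β) = Real.exp (-c/2) * (c/y^2 * Real.exp β) by ring,
    ← mul_add, mul_comm (1 + c/y^2) (Real.exp (-c/2))]
  apply mul_le_mul_of_nonneg_left _ hexp.le
  -- goal : exp (-α) + c/y^2 * exp β ≤ 1 + c/y^2
  rcases eq_or_lt_of_le hαn with h0 | hαp
  · have hβ0 : β = 0 := by rw [hid1, ← h0]; ring
    rw [← h0, hβ0]; simp
  · have hcy2 : c/y^2 = β/α := by rw [hid1]; field_simp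
    rw [hcy2]
    rw [div_mul_eq_mul_div, ← sub_nonneg]
    have : 1 + β/α - (Real.exp (-α) + β * Real.exp β / α)
        = (α * (1 - Real.exp (-α)) - β * (Real.exp β - 1)) / α := by
      field_simp; ring
    rw [this]
    exact div_nonneg (by linarith) hαp.le

lemma subst_lemma {a b : ℝ} (ha : 0 < a) (hab : a ≤ b) :
    ∫ u in a..(Real.sqrt (a*b)), gs u
      = ∫ y in (Real.sqrt (a*b))..b, (a*b)/y^2 * gs ((a*b)/y) := by
  set c := a*b with hc
  set m := Real.sqrt c with hm
  have hb : 0 < b := lt_of_lt_of_le ha hab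
  have hc0 : 0 < c := by positivity
  have hm0 : 0 < m := Real.sqrt_pos.mpr hc0
  have hmsq : m * m = c := Real.mul_self_sqrt hc0.le
  have hmb : m ≤ b := by
    rw [hm, hc, show a*b = b*a by ring]
    calc Real.sqrt (b*a) ≤ Real.sqrt (b*b) := Real.sqrt_le_sqrt (by nlinarith)
      _ = b := Real.sqrt_mul_self hb.le
  have key : ∀ y ∈ uIcc m b, HasDerivAt (fun y => c/y) (-(c/y^2)) y := by
    intro y hy
    rw [uIcc_of_le hmb] at hy
    have hy0 : y ≠ 0 := ne_of_gt (lt_of_lt_of_le hm0 hy.1)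
    simp only [div_eq_mul_inv]
    have h := ((hasDerivAt_inv hy0).const_mul c)
    exact h.congr_deriv (by ring)
  have hcont : ContinuousOn (fun y => -(c/y^2)) (uIcc m b) := by
    rw [uIcc_of_le hmb]
    apply ContinuousOn.neg
    apply ContinuousOn.div continuousOn_const (by fun_prop)
    intro y hy
    exact pow_ne_zero 2 (ne_of_gt (lt_of_lt_of_le hm0 hy.1))
  have := intervalIntegral.integral_comp_smul_deriv key hcont gs_cont
  simp only [smul_eq_mul, Function.comp] at this
  have hfm : c/m = m := by rw [eq_comm, eq_div_iff hm0.ne']; exact hmsq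
  have hfb : c/b = a := by rw [hc, mul_div_assoc, div_self hb.ne', mul_one]
  rw [hfm, hfb] at this
  have h2 : (∫ x in m..a, gs x) = - ∫ u in a..m, gs u := intervalIntegral.integral_symm _ _
  rw [h2] at this
  have h3 : (∫ y in m..b, -(c/y^2) * gs (c/y)) = - ∫ y in m..b, (c/y^2) * gs (c/y) := by
    rw [← intervalIntegral.integral_neg]
    congr 1; funext y; ring
  rw [h3] at this
  linarith [this]

lemma L2 {a b : ℝ} (ha : 0 < a) (hab : a ≤ b) (hcond : a * gs a = b * gs b) :
    ∫ u in a..b, gs u ≤ (b - a) * Real.exp (-(a*b)/2) := by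
  rcases eq_or_lt_of_le hab with rfl | hlt
  · simp
  have hb : 0 < b := lt_trans ha hlt
  set c := a*b with hc
  have hc0 : 0 < c := by positivity
  have hc1 : c ≤ 1 := ab_le_one ha hlt hcond
  set m := Real.sqrt c with hm
  have hm0 : 0 < m := Real.sqrt_pos.mpr hc0
  have hmsq : m * m = c := Real.mul_self_sqrt hc0.le
  have ham : a ≤ m := by
    rw [hm, hc]
    calc a = Real.sqrt (a*a) := (Real.sqrt_mul_self ha.le).symm
      _ ≤ Real.sqrt (a*b) := Real.sqrt_le_sqrt (by nlinarith)
  have hmb : m ≤ b := by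
    rw [hm, hc]
    calc Real.sqrt (a*b) ≤ Real.sqrt (b*b) := Real.sqrt_le_sqrt (by nlinarith)
      _ = b := Real.sqrt_mul_self hb.le
  have hii : ∀ u v : ℝ, IntervalIntegrable gs volume u v :=
    fun u v => gs_cont.intervalIntegrable u v
  have hsplit : (∫ u in a..b, gs u) = (∫ u in a..m, gs u) + ∫ u in m..b, gs u :=
    (intervalIntegral.integral_add_adjacent_intervals (hii a m) (hii m b)).symm
  rw [hsplit, subst_lemma ha hab, ← hm, ← hc]
  have hcont2 : ContinuousOn (fun y : ℝ => c/y^2 * gs (c/y) + gs y) (uIcc m b) := by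
    rw [uIcc_of_le hmb]
    have hne : ∀ y ∈ Icc m b, y ≠ 0 := fun y hy => ne_of_gt (lt_of_lt_of_le hm0 hy.1)
    apply ContinuousOn.add _ gs_cont.continuousOn
    apply ContinuousOn.mul
    · exact ContinuousOn.div continuousOn_const (by fun_prop)
        (fun y hy => pow_ne_zero 2 (hne y hy))
    · exact gs_cont.comp_continuousOn
        (ContinuousOn.div continuousOn_const (by fun_prop) hne)
  have hint1 : IntervalIntegrable (fun y : ℝ => c/y^2 * gs (c/y)) volume m b := by
    apply ContinuousOn.intervalIntegrable
    rw [uIcc_of_le hmb]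
    intro y hy
    have h1 := hcont2.sub gs_cont.continuousOn
    rw [uIcc_of_le hmb] at h1
    simpa [Pi.sub_def] using h1 y hy
  have hsum : (∫ y in m..b, c/y^2 * gs (c/y)) + (∫ u in m..b, gs u)
      = ∫ y in m..b, (c/y^2 * gs (c/y) + gs y) := by
    rw [← intervalIntegral.integral_add hint1 (hii m b)]
  have hmono : (∫ y in m..b, (c/y^2 * gs (c/y) + gs y))
      ≤ ∫ y in m..b, (1 + c/y^2) * Real.exp (-c/2) := by
    apply intervalIntegral.integral_mono_on hmb (hint1.add (hii m b))
    · apply ContinuousOn.intervalIntegrable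
      rw [uIcc_of_le hmb]
      have hne : ∀ y ∈ Icc m b, (y:ℝ)^2 ≠ 0 :=
        fun y hy => pow_ne_zero 2 (ne_of_gt (lt_of_lt_of_le hm0 hy.1))
      exact ((continuousOn_const.add (ContinuousOn.div continuousOn_const (by fun_prop)
        hne)).mul continuousOn_const)
    · intro y hy
      have := pw (c := c) (y := y) hc0 hc1 (by rw [← hm]; exact hy.1)
      linarith
  have hval : (∫ y in m..b, (1 + c/y^2) * Real.exp (-c/2)) = (b - a) * Real.exp (-(c/2)) := by
    have hder : ∀ y ∈ uIcc m b,
        HasDerivAt (fun y : ℝ => (y - c/y) * Real.exp (-c/2))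
          ((1 + c/y^2) * Real.exp (-c/2)) y := by
      intro y hy
      rw [uIcc_of_le hmb] at hy
      have hy0 : y ≠ 0 := ne_of_gt (lt_of_lt_of_le hm0 hy.1)
      have h1 : HasDerivAt (fun y : ℝ => y - c/y) (1 + c/y^2) y := by
        have h2 := (hasDerivAt_id y).sub ((hasDerivAt_inv hy0).const_mul c)
        simp only [div_eq_mul_inv]
        exact h2.congr_deriv (by ring)
      exact h1.mul_const _
    have hintc : IntervalIntegrable (fun y : ℝ => (1 + c/y^2) * Real.exp (-c/2)) volume m b := by
      apply ContinuousOn.intervalIntegrable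
      rw [uIcc_of_le hmb]
      have hne : ∀ y ∈ Icc m b, (y:ℝ)^2 ≠ 0 :=
        fun y hy => pow_ne_zero 2 (ne_of_gt (lt_of_lt_of_le hm0 hy.1))
      exact ((continuousOn_const.add (ContinuousOn.div continuousOn_const (by fun_prop)
        hne)).mul continuousOn_const)
    rw [intervalIntegral.integral_eq_sub_of_hasDerivAt hder hintc]
    have e1 : c/b = a := by rw [hc, mul_div_assoc, div_self hb.ne', mul_one]
    have e2 : c/m = m := by rw [eq_comm, eq_div_iff hm0.ne']; exact hmsq
    rw [e1, e2]
    ring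
  have : -(c/2) = -c/2 := by ring
  rw [this] at hval
  linarith

noncomputable def Gq (q x : ℝ) : ℝ := ∫ u in x..(q*x), gs u

lemma Psi_hasDerivAt (y : ℝ) : HasDerivAt (fun s => ∫ u in (0:ℝ)..s, gs u) (gs y) y :=
  intervalIntegral.integral_hasDerivAt_right (gs_cont.intervalIntegrable _ _)
    (gs_cont.stronglyMeasurable.stronglyMeasurableAtFilter)
    gs_cont.continuousAt

lemma Gq_eq (q x : ℝ) :
    Gq q x = (∫ u in (0:ℝ)..(q*x), gs u) - ∫ u in (0:ℝ)..x, gs u :=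
  (intervalIntegral.integral_interval_sub_left (gs_cont.intervalIntegrable _ _)
    (gs_cont.intervalIntegrable _ _)).symm

lemma Gq_hasDerivAt (q x : ℝ) : HasDerivAt (Gq q) (q * gs (q*x) - gs x) x := by
  have h1 : HasDerivAt (fun x : ℝ => ∫ u in (0:ℝ)..(q*x), gs u) (q * gs (q*x)) x := by
    have h2 := (Psi_hasDerivAt (q*x)).comp x ((hasDerivAt_id x).const_mul q)
    simpa [mul_comm, Function.comp_def] using h2
  have h3 := h1.sub (Psi_hasDerivAt x)
  have : Gq q = fun x => (∫ u in (0:ℝ)..(q*x), gs u) - ∫ u in (0:ℝ)..x, gs u := by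
    funext y; exact Gq_eq q y
  rw [this]
  exact h3

lemma Gq_neg (q x : ℝ) : Gq q (-x) = - Gq q x := by
  unfold Gq
  have h1 : (∫ u in (q*x)..x, gs (-u)) = ∫ u in (-x)..(-(q*x)), gs u :=
    intervalIntegral.integral_comp_neg (a := q*x) (b := x) (f := gs)
  have h2 : ∀ u : ℝ, gs (-u) = gs u := by intro u; unfold gs; ring_nf
  simp only [h2] at h1
  rw [mul_neg, ← h1, intervalIntegral.integral_symm]

-- derivative sign criterion
lemma dsign (q : ℝ) (hq : 0 < q) (x : ℝ) :
    0 ≤ q * gs (q*x) - gs x ↔ (q^2-1) * x^2 / 2 ≤ Real.log q := by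
  rw [sub_nonneg]
  unfold gs
  rw [show q * Real.exp (-(q*x)^2/2) = Real.exp (Real.log q + -(q*x)^2/2) by
    rw [Real.exp_add, Real.exp_log hq]]
  rw [Real.exp_le_exp]
  constructor <;> intro h <;> nlinarith [h]

lemma dsign' (q : ℝ) (hq : 0 < q) (x : ℝ) :
    q * gs (q*x) - gs x ≤ 0 ↔ Real.log q ≤ (q^2-1) * x^2 / 2 := by
  rw [sub_nonpos]
  unfold gs
  rw [show q * Real.exp (-(q*x)^2/2) = Real.exp (Real.log q + -(q*x)^2/2) by
    rw [Real.exp_add, Real.exp_log hq]]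
  rw [Real.exp_le_exp]
  constructor <;> intro h <;> nlinarith [h]

noncomputable def tq (q : ℝ) : ℝ := Real.sqrt (Real.log (q^2) / (q^2-1))

lemma tq_sq {q : ℝ} (hq : 0 < q) (hne : q ≠ 1) :
    (q^2 - 1) * (tq q)^2 / 2 = Real.log q ∧ 0 < tq q := by
  have hlog2 : Real.log (q^2) = 2 * Real.log q := by
    rw [sq, Real.log_mul hq.ne' hq.ne']; ring
  have hpos : 0 < Real.log (q^2) / (q^2-1) := by
    rcases lt_or_gt_of_ne hne with h | h
    · apply div_pos_of_neg_of_neg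
      · rw [hlog2]
        have : Real.log q < 0 := Real.log_neg hq h
        linarith
      · nlinarith
    · apply div_pos
      · rw [hlog2]
        have : 0 < Real.log q := Real.log_pos h
        linarith
      · nlinarith
  have hne2 : q^2 - 1 ≠ 0 := by
    rcases lt_or_gt_of_ne hne with h | h
    · nlinarith
    · nlinarith
  constructor
  · unfold tq
    rw [Real.sq_sqrt hpos.le, hlog2]
    field_simp
  · exact Real.sqrt_pos.mpr hpos

lemma Gq_cont (q : ℝ) : Continuous (Gq q) :=
  continuous_iff_continuousAt.mpr (fun x => (Gq_hasDerivAt q x).continuousAt)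

lemma abs_Gq_le {q : ℝ} (hq : 0 < q) (hne : q ≠ 1) (x : ℝ) :
    |Gq q x| ≤ |Gq q (tq q)| := by
  obtain ⟨hcrit, ht0⟩ := tq_sq hq hne
  set t := tq q with htdef
  suffices h : ∀ y : ℝ, 0 ≤ y → |Gq q y| ≤ |Gq q t| by
    rcases le_or_gt 0 x with hx | hx
    · exact h x hx
    · have := h (-x) (by linarith)
      rwa [Gq_neg, abs_neg] at this
  intro y hy
  rcases lt_or_gt_of_ne hne with hq1 | hq1
  · -- q < 1 : Gq nonpos on [0,∞), antitone on [0,t], monotone on [t,∞)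
    have hnp : ∀ z : ℝ, 0 ≤ z → Gq q z ≤ 0 := by
      intro z hz
      have h1 : (0:ℝ) ≤ ∫ u in (q*z)..z, gs u :=
        intervalIntegral.integral_nonneg (by nlinarith) (fun u _ => (gs_pos u).le)
      unfold Gq
      rw [intervalIntegral.integral_symm]
      linarith
    have hanti : AntitoneOn (Gq q) (Icc 0 t) := by
      apply antitoneOn_of_hasDerivWithinAt_nonpos (convex_Icc 0 t) (Gq_cont q).continuousOn
        (fun z hz => (Gq_hasDerivAt q z).hasDerivWithinAt)
      intro z hz
      rw [interior_Icc] at hz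
      rw [dsign' q hq z]
      have hs : q^2 - 1 < 0 := by nlinarith
      have hzt : z^2 ≤ t^2 := by nlinarith [hz.1.le, hz.2.le]
      nlinarith [mul_le_mul_of_nonpos_left hzt hs.le]
    have hmono : MonotoneOn (Gq q) (Ici t) := by
      apply monotoneOn_of_hasDerivWithinAt_nonneg (convex_Ici t) (Gq_cont q).continuousOn
        (fun z hz => (Gq_hasDerivAt q z).hasDerivWithinAt)
      intro z hz
      rw [interior_Ici] at hz
      rw [dsign q hq z]
      have hs : q^2 - 1 < 0 := by nlinarith
      have hz' : t < z := hz
      have hzt : t^2 ≤ z^2 := by nlinarith [ht0.le]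
      nlinarith [mul_le_mul_of_nonpos_left hzt hs.le]
    rw [abs_of_nonpos (hnp y hy), abs_of_nonpos (hnp t ht0.le)]
    rcases le_total y t with hyt | hyt
    · have := hanti ⟨hy, hyt⟩ ⟨ht0.le, le_refl t⟩ hyt
      linarith
    · have := hmono (le_refl t : t ∈ Ici t) (hyt : y ∈ Ici t) hyt
      linarith
  · -- q > 1
    have hnn : ∀ z : ℝ, 0 ≤ z → 0 ≤ Gq q z := by
      intro z hz
      exact intervalIntegral.integral_nonneg (by nlinarith) (fun u _ => (gs_pos u).le)
    have hmono : MonotoneOn (Gq q) (Icc 0 t) := by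
      apply monotoneOn_of_hasDerivWithinAt_nonneg (convex_Icc 0 t) (Gq_cont q).continuousOn
        (fun z hz => (Gq_hasDerivAt q z).hasDerivWithinAt)
      intro z hz
      rw [interior_Icc] at hz
      rw [dsign q hq z]
      have hs : 0 < q^2 - 1 := by nlinarith
      have hzt : z^2 ≤ t^2 := by nlinarith [hz.1.le, hz.2.le]
      nlinarith [mul_le_mul_of_nonneg_left hzt hs.le]
    have hanti : AntitoneOn (Gq q) (Ici t) := by
      apply antitoneOn_of_hasDerivWithinAt_nonpos (convex_Ici t) (Gq_cont q).continuousOn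
        (fun z hz => (Gq_hasDerivAt q z).hasDerivWithinAt)
      intro z hz
      rw [interior_Ici] at hz
      rw [dsign' q hq z]
      have hs : 0 < q^2 - 1 := by nlinarith
      have hz' : t < z := hz
      have hzt : t^2 ≤ z^2 := by nlinarith [ht0.le]
      nlinarith [mul_le_mul_of_nonneg_left hzt hs.le]
    rw [abs_of_nonneg (hnn y hy), abs_of_nonneg (hnn t ht0.le)]
    rcases le_total y t with hyt | hyt
    · exact hmono ⟨hy, hyt⟩ ⟨ht0.le, le_refl t⟩ hyt
    · exact hanti (le_refl t : t ∈ Ici t) (hyt : y ∈ Ici t) hyt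

lemma xgs_le {x : ℝ} (hx : 0 ≤ x) : x * gs x ≤ Real.exp (-(1:ℝ)/2) := by
  rcases eq_or_lt_of_le hx with rfl | hx0
  · simp [Real.exp_pos, le_of_lt]
  · unfold gs
    rw [show x * Real.exp (-x^2/2) = Real.exp (Real.log x + -x^2/2) by
      rw [Real.exp_add, Real.exp_log hx0]]
    apply Real.exp_le_exp.2
    have h1 := Real.log_le_sub_one_of_pos (show (0:ℝ) < x^2 by positivity)
    rw [Real.log_pow] at h1
    push_cast at h1
    linarith

lemma L1 {a b : ℝ} (ha : 0 ≤ a) (hab : a ≤ b) :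
    ∫ u in a..b, gs u ≤ (b - a) * gs a := by
  have h := intervalIntegral.integral_mono_on (μ := volume) (f := gs) (g := fun _ => gs a) hab
    (gs_cont.intervalIntegrable _ _) intervalIntegrable_const
    (fun u hu => gs_anti ha hu.1)
  simpa using h

lemma abs_Gq_le_b1 {q : ℝ} (hq : 0 < q) (x : ℝ) :
    |Gq q x| ≤ (max q q⁻¹ - 1) * Real.exp (-(1:ℝ)/2) := by
  have hgqneg : ∀ z : ℝ, Gq q (-z) = - Gq q z := fun z => Gq_neg q z
  suffices h : ∀ y : ℝ, 0 ≤ y → |Gq q y| ≤ (max q q⁻¹ - 1) * Real.exp (-(1:ℝ)/2) by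
    rcases le_or_gt 0 x with hx | hx
    · exact h x hx
    · have := h (-x) (by linarith)
      rwa [hgqneg, abs_neg] at this
  intro y hy
  rcases le_total 1 q with hq1 | hq1
  · have hmax : max q q⁻¹ = q := max_eq_left (le_trans (inv_le_one_of_one_le₀ hq1) hq1)
    have hyq : y ≤ q*y := by nlinarith
    have hnn : (0:ℝ) ≤ Gq q y :=
      intervalIntegral.integral_nonneg hyq (fun u _ => (gs_pos u).le)
    rw [abs_of_nonneg hnn, hmax]
    calc Gq q y ≤ (q*y - y) * gs y := L1 hy hyq
      _ = (q - 1) * (y * gs y) := by ring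
      _ ≤ (q - 1) * Real.exp (-(1:ℝ)/2) := by
          apply mul_le_mul_of_nonneg_left (xgs_le hy) (by linarith)
  · have hinv : (1:ℝ) ≤ q⁻¹ := (one_le_inv₀ hq).mpr hq1
    have hmax : max q q⁻¹ = q⁻¹ := max_eq_right (le_trans hq1 hinv)
    have hqy : q*y ≤ y := by nlinarith
    have hqy0 : 0 ≤ q*y := by positivity
    have hsym : Gq q y = - ∫ u in (q*y)..y, gs u := intervalIntegral.integral_symm _ _
    have hnn : (0:ℝ) ≤ ∫ u in (q*y)..y, gs u :=
      intervalIntegral.integral_nonneg hqy (fun u _ => (gs_pos u).le)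
    rw [hsym, abs_neg, abs_of_nonneg hnn, hmax]
    calc (∫ u in (q*y)..y, gs u) ≤ (y - q*y) * gs (q*y) := L1 hqy0 hqy
      _ = (q⁻¹ - 1) * ((q*y) * gs (q*y)) := by field_simp
      _ ≤ (q⁻¹ - 1) * Real.exp (-(1:ℝ)/2) := by
          apply mul_le_mul_of_nonneg_left (xgs_le hqy0)
          linarith

end SupCDFAux

/-- for every `q > 0`,
`sup_x |Φ(qx) − Φ(x)| ≤ (2πe)^{-1/2} (max{q, 1/q} − 1)`; moreover, for `q ≠ 1` the supremum
is attained at `t_q = √(ln q² / (q² − 1))`, i.e. it equals `|Φ(q t_q) − Φ(t_q)|`, and it is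
bounded by `√((q−1) ln q / (π(q+1))) · exp{−min(1,q) ln q/(q²−1)}`. -/
theorem sup_abs_stdNormalCDF_scale (q : ℝ) (hq : 0 < q) :
    (⨆ x : ℝ, |stdNormalCDF (q * x) - stdNormalCDF x|)
        ≤ (Real.sqrt (2 * Real.pi * Real.exp 1))⁻¹ * (max q q⁻¹ - 1) ∧
    (q ≠ 1 →
      (⨆ x : ℝ, |stdNormalCDF (q * x) - stdNormalCDF x|)
          = |stdNormalCDF (q * Real.sqrt (Real.log (q ^ 2) / (q ^ 2 - 1)))
              - stdNormalCDF (Real.sqrt (Real.log (q ^ 2) / (q ^ 2 - 1)))| ∧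
      (⨆ x : ℝ, |stdNormalCDF (q * x) - stdNormalCDF x|)
          ≤ Real.sqrt ((q - 1) * Real.log q / (Real.pi * (q + 1)))
              * Real.exp (-(min 1 q * Real.log q / (q ^ 2 - 1)))) := by
  have hπ : Real.pi ≠ 0 := Real.pi_ne_zero
  set C := (Real.sqrt (2 * Real.pi))⁻¹ with hC
  have hC0 : (0:ℝ) ≤ C := inv_nonneg.mpr (Real.sqrt_nonneg _)
  have hFC : ∀ x : ℝ, |stdNormalCDF (q * x) - stdNormalCDF x| = C * |Gq q x| := by
    intro x
    rw [cdf_sub x (q*x), abs_mul, abs_of_nonneg hC0]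
    rfl
  have hE : (Real.sqrt (2 * Real.pi * Real.exp 1))⁻¹ = C * Real.exp (-(1:ℝ)/2) := by
    have h1 : Real.exp 1 = Real.exp ((1:ℝ)/2) * Real.exp ((1:ℝ)/2) := by
      rw [← Real.exp_add]; norm_num
    have h2 : Real.sqrt (Real.exp 1) = Real.exp ((1:ℝ)/2) := by
      rw [h1, Real.sqrt_mul_self (Real.exp_pos _).le]
    rw [show (2:ℝ) * Real.pi * Real.exp 1 = (2*Real.pi) * Real.exp 1 by ring,
      Real.sqrt_mul (by positivity), h2, mul_inv, hC]
    congr 1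
    rw [← Real.exp_neg]
    norm_num
  constructor
  · apply ciSup_le
    intro x
    rw [hFC x]
    calc C * |Gq q x| ≤ C * ((max q q⁻¹ - 1) * Real.exp (-(1:ℝ)/2)) :=
          mul_le_mul_of_nonneg_left (abs_Gq_le_b1 hq x) hC0
      _ = (C * Real.exp (-(1:ℝ)/2)) * (max q q⁻¹ - 1) := by ring
      _ = (Real.sqrt (2 * Real.pi * Real.exp 1))⁻¹ * (max q q⁻¹ - 1) := by rw [hE]
  · intro hne
    obtain ⟨hcrit, ht0⟩ := tq_sq hq hne
    set t := tq q with htdef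
    have hne2 : q^2 - 1 ≠ 0 := by
      rcases lt_or_gt_of_ne hne with h | h
      · nlinarith
      · nlinarith
    have hts : t^2 = 2 * Real.log q / (q^2 - 1) := by
      field_simp at hcrit ⊢
      linarith
    have hkey : ∀ x : ℝ, |stdNormalCDF (q*x) - stdNormalCDF x| ≤ C * |Gq q t| := fun x => by
      rw [hFC x]; exact mul_le_mul_of_nonneg_left (abs_Gq_le hq hne x) hC0
    have hbdd : BddAbove (Set.range fun x : ℝ => |stdNormalCDF (q*x) - stdNormalCDF x|) :=
      ⟨C * |Gq q t|, by rintro z ⟨x, rfl⟩; exact hkey x⟩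
    have hsup : (⨆ x : ℝ, |stdNormalCDF (q*x) - stdNormalCDF x|) = C * |Gq q t| := by
      apply le_antisymm (ciSup_le hkey)
      have h3 := le_ciSup hbdd t
      rwa [hFC t] at h3
    have htq : Real.sqrt (Real.log (q ^ 2) / (q ^ 2 - 1)) = t := rfl
    refine ⟨by rw [hsup, htq, hFC t], ?_⟩
    rw [hsup]
    rcases lt_or_gt_of_ne hne with hq1 | hq1
    · -- q < 1 : hard bound
      have hlog : Real.log q < 0 := Real.log_neg hq hq1
      have hqt : q * t ≤ t := by nlinarith
      have hcrit' : q * gs (q*t) = gs t := by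
        unfold gs
        rw [show q * Real.exp (-(q*t)^2/2) = Real.exp (Real.log q + -(q*t)^2/2) by
          rw [Real.exp_add, Real.exp_log hq]]
        congr 1
        linear_combination -hcrit
      have hcond : (q*t) * gs (q*t) = t * gs t := by
        calc (q*t) * gs (q*t) = t * (q * gs (q*t)) := by ring
          _ = t * gs t := by rw [hcrit']
      have hL2 := L2 (by positivity) hqt hcond
      have hsym : Gq q t = - ∫ u in (q*t)..t, gs u := intervalIntegral.integral_symm _ _
      have hnn : (0:ℝ) ≤ ∫ u in (q*t)..t, gs u :=
        intervalIntegral.integral_nonneg hqt (fun u _ => (gs_pos u).le)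
      rw [hsym, abs_neg, abs_of_nonneg hnn]
      have hmin : min 1 q = q := min_eq_right hq1.le
      have hexp : Real.exp (-((q*t)*t)/2) = Real.exp (-(min 1 q * Real.log q / (q^2-1))) := by
        congr 1
        rw [hmin, show (q*t)*t = q * t^2 by ring, hts]
        field_simp
      have hpre : C * (t - q*t) = Real.sqrt ((q-1) * Real.log q / (Real.pi*(q+1))) := by
        have h1 : t - q*t = Real.sqrt ((1-q)^2 * t^2) := by
          rw [Real.sqrt_mul (sq_nonneg _), Real.sqrt_sq (by linarith : (0:ℝ) ≤ 1 - q),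
            Real.sqrt_sq ht0.le]
          ring
        rw [h1, hC, ← Real.sqrt_inv, ← Real.sqrt_mul (by positivity)]
        congr 1
        rw [hts]
        field_simp
        ring
      calc C * ∫ u in (q*t)..t, gs u
          ≤ C * ((t - q*t) * Real.exp (-((q*t)*t)/2)) := mul_le_mul_of_nonneg_left hL2 hC0
        _ = (C * (t - q*t)) * Real.exp (-((q*t)*t)/2) := by ring
        _ = Real.sqrt ((q-1) * Real.log q / (Real.pi*(q+1)))
              * Real.exp (-(min 1 q * Real.log q / (q^2-1))) := by rw [hpre, hexp]
    · -- q > 1 : easy bound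
      have hlog : 0 < Real.log q := Real.log_pos hq1
      have hqt : t ≤ q * t := by nlinarith
      have hnn : (0:ℝ) ≤ Gq q t :=
        intervalIntegral.integral_nonneg hqt (fun u _ => (gs_pos u).le)
      have hL1 : Gq q t ≤ (q*t - t) * gs t := L1 ht0.le hqt
      rw [abs_of_nonneg hnn]
      have hmin : min 1 q = 1 := min_eq_left hq1.le
      have hexp : gs t = Real.exp (-(min 1 q * Real.log q / (q^2-1))) := by
        unfold gs
        congr 1
        rw [hmin, hts]
        field_simp
      have hpre : C * (q*t - t) = Real.sqrt ((q-1) * Real.log q / (Real.pi*(q+1))) := by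
        have h1 : q*t - t = Real.sqrt ((q-1)^2 * t^2) := by
          rw [Real.sqrt_mul (sq_nonneg _), Real.sqrt_sq (by linarith : (0:ℝ) ≤ q - 1),
            Real.sqrt_sq ht0.le]
          ring
        rw [h1, hC, ← Real.sqrt_inv, ← Real.sqrt_mul (by positivity)]
        congr 1
        rw [hts]
        field_simp
        ring
      calc C * Gq q t ≤ C * ((q*t - t) * gs t) := mul_le_mul_of_nonneg_left hL1 hC0
        _ = (C * (q*t - t)) * gs t := by ring
        _ = Real.sqrt ((q-1) * Real.log q / (Real.pi*(q+1)))
              * Real.exp (-(min 1 q * Real.log q / (q^2-1))) := by rw [hpre, hexp]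
end

section
/- For every a ∈ ℝ, sup_{x∈ℝ} |Φ(x + a) − Φ(x)| = 2Φ(|a|/2) − 1 ≤ |a|/√(2π). -/
open MeasureTheory ProbabilityTheory Real

namespace StdNormalAux

open Set

noncomputable def phiF (z : ℝ) : ℝ := Real.exp (-z ^ 2 / 2)

lemma phiF_cont : Continuous phiF := by unfold phiF; continuity

lemma phiF_integrable : Integrable phiF := by
  have : phiF = fun z => Real.exp (-(1/2) * z ^ 2) := by funext z; unfold phiF; ring_nf
  rw [this]; exact integrable_exp_neg_mul_sq (by norm_num)

lemma phiF_total : ∫ z, phiF z = Real.sqrt (2 * Real.pi) := by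
  have : phiF = fun z => Real.exp (-(1/2) * z ^ 2) := by funext z; unfold phiF; ring_nf
  rw [this, integral_gaussian, show π / (1/2 : ℝ) = 2 * π by ring]

lemma phiF_nonneg (z : ℝ) : 0 ≤ phiF z := (Real.exp_pos _).le

lemma phiF_le_one (z : ℝ) : phiF z ≤ 1 := by
  unfold phiF
  rw [show (1:ℝ) = Real.exp 0 by simp]
  apply Real.exp_le_exp.2
  nlinarith [sq_nonneg z]

lemma sqrt2pi_pos : 0 < Real.sqrt (2 * Real.pi) :=
  Real.sqrt_pos.2 (by positivity)

lemma stdNormalCDF_eq (x : ℝ) :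
    stdNormalCDF x = (Real.sqrt (2 * Real.pi))⁻¹ * ∫ z in Iic x, phiF z := rfl

lemma stdNormalCDF_sub (x y : ℝ) :
    stdNormalCDF y - stdNormalCDF x = (Real.sqrt (2 * Real.pi))⁻¹ * ∫ t in x..y, phiF t := by
  rw [stdNormalCDF_eq, stdNormalCDF_eq, ← mul_sub,
    intervalIntegral.integral_Iic_sub_Iic phiF_integrable.integrableOn
      phiF_integrable.integrableOn]

lemma stdNormalCDF_neg (x : ℝ) : stdNormalCDF (-x) = 1 - stdNormalCDF x := by
  have h1 : (∫ z in Iic (-x), phiF z) = ∫ z in Ioi x, phiF z := by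
    have : (∫ z in Iic (-x), phiF z) = ∫ z in Iic (-x), phiF (-z) := by
      apply setIntegral_congr_fun measurableSet_Iic
      intro z _; unfold phiF; ring_nf
    rw [this, integral_comp_neg_Iic, neg_neg]
  have h2 : (∫ z in Iic x, phiF z) + ∫ z in Ioi x, phiF z = Real.sqrt (2 * Real.pi) := by
    rw [intervalIntegral.integral_Iic_add_Ioi phiF_integrable.integrableOn
      phiF_integrable.integrableOn, phiF_total]
  have hT : (Real.sqrt (2 * Real.pi))⁻¹ * Real.sqrt (2 * Real.pi) = 1 :=
    inv_mul_cancel₀ sqrt2pi_pos.ne'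
  rw [stdNormalCDF_eq, stdNormalCDF_eq, h1]
  have h3 : (Real.sqrt (2 * Real.pi))⁻¹ * ((∫ z in Iic x, phiF z) + ∫ z in Ioi x, phiF z)
      = (Real.sqrt (2 * Real.pi))⁻¹ * Real.sqrt (2 * Real.pi) := by rw [h2]
  rw [hT, mul_add] at h3
  linarith

lemma stdNormalCDF_mono : Monotone stdNormalCDF := by
  intro x y hxy
  have h := stdNormalCDF_sub x y
  have hI : 0 ≤ ∫ t in x..y, phiF t :=
    intervalIntegral.integral_nonneg hxy (fun t _ => phiF_nonneg t)
  nlinarith [inv_pos.2 sqrt2pi_pos, mul_nonneg (inv_pos.2 sqrt2pi_pos).le hI]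

noncomputable def Hint (x : ℝ) : ℝ := ∫ t in (0:ℝ)..x, phiF t

lemma Hint_hasDeriv (x : ℝ) : HasDerivAt Hint (phiF x) x :=
  intervalIntegral.integral_hasDerivAt_right (phiF_cont.intervalIntegrable 0 x)
    phiF_cont.aestronglyMeasurable.stronglyMeasurableAtFilter phiF_cont.continuousAt

lemma G_hasDeriv (a x : ℝ) :
    HasDerivAt (fun u => Hint (u + a) - Hint u) (phiF (x + a) - phiF x) x := by
  have h1 : HasDerivAt (fun u : ℝ => Hint (u + a)) (phiF (x + a)) x := by
    have := (Hint_hasDeriv (x + a)).comp x ((hasDerivAt_id x).add_const a)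
    simpa [Function.comp_def] using this
  exact h1.sub (Hint_hasDeriv x)

lemma phiF_anti {u v : ℝ} (h : u ^ 2 ≤ v ^ 2) : phiF v ≤ phiF u := by
  unfold phiF; apply Real.exp_le_exp.2; linarith

lemma G_le (a : ℝ) (ha : 0 ≤ a) (x : ℝ) :
    Hint (x + a) - Hint x ≤ Hint (-(a/2) + a) - Hint (-(a/2)) := by
  set G : ℝ → ℝ := fun u => Hint (u + a) - Hint u with hG
  have hd : ∀ u, HasDerivAt G (phiF (u + a) - phiF u) u := fun u => G_hasDeriv a u
  have hc : Continuous G := by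
    have : Differentiable ℝ G := fun u => (hd u).differentiableAt
    exact this.continuous
  rcases le_total x (-(a/2)) with hx | hx
  · have mono : MonotoneOn G (Iic (-(a/2))) := by
      apply monotoneOn_of_deriv_nonneg (convex_Iic _) hc.continuousOn
      · intro u hu
        exact (hd u).differentiableAt.differentiableWithinAt
      · intro u hu
        rw [interior_Iic] at hu
        rw [(hd u).deriv]
        have : (u + a) ^ 2 ≤ u ^ 2 := by nlinarith [hu.out]
        have := phiF_anti this
        linarith
    exact mono hx (mem_Iic.2 le_rfl) hx
  · have anti : AntitoneOn G (Ici (-(a/2))) := by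
      apply antitoneOn_of_deriv_nonpos (convex_Ici _) hc.continuousOn
      · intro u hu
        exact (hd u).differentiableAt.differentiableWithinAt
      · intro u hu
        rw [interior_Ici] at hu
        rw [(hd u).deriv]
        have : u ^ 2 ≤ (u + a) ^ 2 := by nlinarith [hu.out]
        have := phiF_anti this
        linarith
    exact anti (mem_Ici.2 le_rfl) hx hx

lemma Hint_sub (x y : ℝ) :
    stdNormalCDF y - stdNormalCDF x = (Real.sqrt (2 * Real.pi))⁻¹ * (Hint y - Hint x) := by
  rw [stdNormalCDF_sub]
  congr 1
  have h : (∫ t in x..(0:ℝ), phiF t) + (∫ t in (0:ℝ)..y, phiF t) = ∫ t in x..y, phiF t :=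
    intervalIntegral.integral_add_adjacent_intervals
      (phiF_cont.intervalIntegrable x 0) (phiF_cont.intervalIntegrable 0 y)
  have h2 : (∫ t in x..(0:ℝ), phiF t) = - ∫ t in (0:ℝ)..x, phiF t :=
    intervalIntegral.integral_symm _ _
  unfold Hint
  rw [← h, h2]
  ring

lemma bound (a : ℝ) (ha : 0 ≤ a) (x : ℝ) :
    |stdNormalCDF (x + a) - stdNormalCDF x| ≤ 2 * stdNormalCDF (a / 2) - 1 := by
  have hnn : 0 ≤ stdNormalCDF (x + a) - stdNormalCDF x :=
    sub_nonneg.2 (stdNormalCDF_mono (by linarith))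
  rw [abs_of_nonneg hnn]
  have h1 := G_le a ha x
  have h2 := Hint_sub x (x + a)
  have h3 := Hint_sub (-(a/2)) (-(a/2) + a)
  have h4 : stdNormalCDF (x + a) - stdNormalCDF x
      ≤ stdNormalCDF (-(a/2) + a) - stdNormalCDF (-(a/2)) := by
    rw [h2, h3]
    exact mul_le_mul_of_nonneg_left h1 (inv_pos.2 sqrt2pi_pos).le
  have h5 : stdNormalCDF (-(a/2)) = 1 - stdNormalCDF (a/2) := stdNormalCDF_neg (a/2)
  have h6 : -(a/2) + a = a/2 := by ring
  rw [h6, h5] at h4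
  linarith

lemma sup_eq (a : ℝ) (ha : 0 ≤ a) :
    (⨆ x : ℝ, |stdNormalCDF (x + a) - stdNormalCDF x|) = 2 * stdNormalCDF (a / 2) - 1 := by
  apply le_antisymm
  · exact ciSup_le (bound a ha)
  · have hb : BddAbove (Set.range fun x => |stdNormalCDF (x + a) - stdNormalCDF x|) := by
      refine ⟨2 * stdNormalCDF (a / 2) - 1, ?_⟩
      rintro _ ⟨x, rfl⟩
      exact bound a ha x
    have hv : |stdNormalCDF (-(a/2) + a) - stdNormalCDF (-(a/2))|
        = 2 * stdNormalCDF (a / 2) - 1 := by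
      have h5 : stdNormalCDF (-(a/2)) = 1 - stdNormalCDF (a/2) := stdNormalCDF_neg (a/2)
      have h6 : -(a/2) + a = a/2 := by ring
      rw [h6, h5]
      have hnn : (0:ℝ) ≤ stdNormalCDF (a/2) - (1 - stdNormalCDF (a/2)) := by
        have := stdNormalCDF_mono (show -(a/2) ≤ a/2 by linarith)
        rw [h5] at this
        linarith
      rw [abs_of_nonneg hnn]
      ring
    calc 2 * stdNormalCDF (a / 2) - 1
        = |stdNormalCDF (-(a/2) + a) - stdNormalCDF (-(a/2))| := hv.symm
      _ ≤ _ := le_ciSup hb (-(a/2))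

lemma stdNormalCDF_zero : stdNormalCDF 0 = 1/2 := by
  have := stdNormalCDF_neg 0
  rw [neg_zero] at this
  linarith

lemma ineq (c : ℝ) (hc : 0 ≤ c) :
    2 * stdNormalCDF c - 1 ≤ 2 * c / Real.sqrt (2 * Real.pi) := by
  have h1 : stdNormalCDF c - stdNormalCDF 0
      = (Real.sqrt (2 * Real.pi))⁻¹ * ∫ t in (0:ℝ)..c, phiF t := stdNormalCDF_sub 0 c
  have h2 : (∫ t in (0:ℝ)..c, phiF t) ≤ c := by
    have hmono : (∫ t in (0:ℝ)..c, phiF t) ≤ ∫ t in (0:ℝ)..c, (1:ℝ) := by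
      apply intervalIntegral.integral_mono_on hc (phiF_cont.intervalIntegrable 0 c)
        (intervalIntegrable_const)
      intro t _; exact phiF_le_one t
    simpa using hmono
  rw [stdNormalCDF_zero] at h1
  have h3 : stdNormalCDF c - 1/2 ≤ (Real.sqrt (2 * Real.pi))⁻¹ * c := by
    rw [h1]
    exact mul_le_mul_of_nonneg_left h2 (inv_pos.2 sqrt2pi_pos).le
  rw [div_eq_mul_inv]
  linarith

end StdNormalAux

/-- for every `a ∈ ℝ`,
`sup_x |Φ(x + a) − Φ(x)| = 2Φ(|a|/2) − 1 ≤ |a|/√(2π)`. -/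
theorem sup_abs_stdNormalCDF_shift (a : ℝ) :
    (⨆ x : ℝ, |stdNormalCDF (x + a) - stdNormalCDF x|) = 2 * stdNormalCDF (|a| / 2) - 1 ∧
    2 * stdNormalCDF (|a| / 2) - 1 ≤ |a| / Real.sqrt (2 * Real.pi) := by
  constructor
  · rcases le_total 0 a with ha | ha
    · rw [abs_of_nonneg ha]
      exact StdNormalAux.sup_eq a ha
    · have hb : 0 ≤ -a := by linarith
      rw [abs_of_nonpos ha]
      have key : (fun x => |stdNormalCDF (x + a) - stdNormalCDF x|)
          = (fun y => |stdNormalCDF (y + (-a)) - stdNormalCDF y|) ∘ (fun x => x + a) := by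
        funext x
        simp only [Function.comp_apply]
        rw [abs_sub_comm]
        congr 2
        ring
      have hsurj : Function.Surjective (fun x : ℝ => x + a) :=
        fun y => ⟨y - a, by ring⟩
      calc (⨆ x : ℝ, |stdNormalCDF (x + a) - stdNormalCDF x|)
          = ⨆ y : ℝ, |stdNormalCDF (y + (-a)) - stdNormalCDF y| := by
            rw [key]
            simp only [iSup]
            congr 1
            exact hsurj.range_comp _
        _ = 2 * stdNormalCDF (-a / 2) - 1 := StdNormalAux.sup_eq (-a) hb
  · have := StdNormalAux.ineq (|a| / 2) (by positivity)
    calc 2 * stdNormalCDF (|a| / 2) - 1 ≤ 2 * (|a| / 2) / Real.sqrt (2 * Real.pi) := this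
      _ = |a| / Real.sqrt (2 * Real.pi) := by ring
end

section
/- Let X be a real random variable with E X² < ∞ and 0 < Var X. Then sup_{x∈ℝ} |P((X − E X)/√(Var X) < x) − Φ(x)| ≤ sup_{z>0} |1/(1+z²) − Φ(−z)|, and the right-hand side equals 0.54093… (in particular it is at most 0.541). -/
open MeasureTheory ProbabilityTheory Real

lemma gauss_eq : (fun z : ℝ => Real.exp (-z ^ 2 / 2)) = fun z : ℝ => Real.exp (-(1/2) * z ^ 2) := by
  funext z; ring_nf

lemma gauss_integrable : Integrable (fun z : ℝ => Real.exp (-z ^ 2 / 2)) := by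
  rw [gauss_eq]; exact integrable_exp_neg_mul_sq (by norm_num)

lemma gauss_total : ∫ z : ℝ, Real.exp (-z ^ 2 / 2) = Real.sqrt (2 * Real.pi) := by
  rw [gauss_eq]
  rw [integral_gaussian]
  congr 1; ring

lemma sqrt2pi_pos : 0 < Real.sqrt (2 * Real.pi) :=
  Real.sqrt_pos.2 (by positivity)

lemma stdNormalCDF_nonneg (x : ℝ) : 0 ≤ stdNormalCDF x := by
  apply mul_nonneg (inv_nonneg.2 sqrt2pi_pos.le)
  apply integral_nonneg; intro z; positivity

lemma stdNormalCDF_mono {x y : ℝ} (h : x ≤ y) : stdNormalCDF x ≤ stdNormalCDF y := by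
  apply mul_le_mul_of_nonneg_left _ (inv_nonneg.2 sqrt2pi_pos.le)
  apply setIntegral_mono_set gauss_integrable.integrableOn
  · filter_upwards with z using by positivity
  · exact HasSubset.Subset.eventuallyLE (Set.Iic_subset_Iic.2 h)

lemma stdNormalCDF_add_neg (x : ℝ) : stdNormalCDF x + stdNormalCDF (-x) = 1 := by
  have h1 : ∫ z in Set.Iic (-x), Real.exp (-z ^ 2 / 2)
      = ∫ z in Set.Ioi x, Real.exp (-z ^ 2 / 2) := by
    rw [← integral_comp_neg_Ioi]
    congr 1; funext z; ring_nf
  unfold stdNormalCDF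
  rw [h1, ← mul_add, intervalIntegral.integral_Iic_add_Ioi gauss_integrable.integrableOn
    gauss_integrable.integrableOn, gauss_total, inv_mul_cancel₀ sqrt2pi_pos.ne']

lemma stdNormalCDF_zero : stdNormalCDF 0 = 1 / 2 := by
  have := stdNormalCDF_add_neg 0
  rw [neg_zero] at this; linarith

lemma stdNormalCDF_le_one (x : ℝ) : stdNormalCDF x ≤ 1 := by
  have := stdNormalCDF_add_neg x
  have := stdNormalCDF_nonneg (-x)
  linarith

lemma stdNormalCDF_neg_le_half (x : ℝ) (hx : 0 ≤ x) : stdNormalCDF (-x) ≤ 1 / 2 := by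
  have := stdNormalCDF_mono (neg_nonpos.2 hx)
  rw [stdNormalCDF_zero] at this; exact this

lemma exp_neg_quad {u : ℝ} (hu : 0 ≤ u) : Real.exp (-u) ≤ 1 - u + u ^ 2 := by
  have h1 : u + 1 ≤ Real.exp u := Real.add_one_le_exp u
  have h2 : 0 < Real.exp u := Real.exp_pos u
  have h3 : 0 ≤ 1 - u + u ^ 2 := by nlinarith [sq_nonneg (u - 1)]
  rw [Real.exp_neg, inv_le_iff_one_le_mul₀ h2]
  nlinarith [mul_le_mul_of_nonneg_left h1 h3, pow_nonneg hu 3]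

lemma sqrt2pi_inv_le : (Real.sqrt (2 * Real.pi))⁻¹ ≤ 0.39895 := by
  have h : (2.50658 : ℝ) ≤ Real.sqrt (2 * Real.pi) := by
    rw [show (2.50658 : ℝ) = Real.sqrt (2.50658 ^ 2) by
      rw [Real.sqrt_sq]; norm_num]
    apply Real.sqrt_le_sqrt
    nlinarith [Real.pi_gt_d6]
  rw [inv_le_comm₀ sqrt2pi_pos (by norm_num)]
  calc (0.39895 : ℝ)⁻¹ ≤ 2.50658 := by norm_num
    _ ≤ _ := h

lemma phi_lower {z : ℝ} (hz : 0 ≤ z) :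
    1 / 2 - (Real.sqrt (2 * Real.pi))⁻¹ * (z - z ^ 3 / 6 + z ^ 5 / 20) ≤ stdNormalCDF (-z) := by
  have hdiff : stdNormalCDF 0 - stdNormalCDF (-z)
      = (Real.sqrt (2 * Real.pi))⁻¹ * ∫ t in (-z)..(0:ℝ), Real.exp (-t ^ 2 / 2) := by
    unfold stdNormalCDF
    rw [← mul_sub, intervalIntegral.integral_Iic_sub_Iic gauss_integrable.integrableOn
      gauss_integrable.integrableOn]
  have hmono : ∫ t in (-z)..(0:ℝ), Real.exp (-t ^ 2 / 2)
      ≤ ∫ t in (-z)..(0:ℝ), (1 - t ^ 2 / 2 + t ^ 4 / 4) := by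
    apply intervalIntegral.integral_mono_on (neg_nonpos.2 hz)
      gauss_integrable.intervalIntegrable
      ((by continuity : Continuous fun t : ℝ => 1 - t ^ 2 / 2 + t ^ 4 / 4).intervalIntegrable _ _)
    intro t _
    have := exp_neg_quad (u := t ^ 2 / 2) (by positivity)
    calc Real.exp (-t ^ 2 / 2) = Real.exp (-(t ^ 2 / 2)) := by ring_nf
      _ ≤ 1 - t ^ 2 / 2 + (t ^ 2 / 2) ^ 2 := this
      _ = 1 - t ^ 2 / 2 + t ^ 4 / 4 := by ring
  have hcomp : ∫ t in (-z)..(0:ℝ), (1 - t ^ 2 / 2 + t ^ 4 / 4) = z - z ^ 3 / 6 + z ^ 5 / 20 := by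
    have hF : ∀ t ∈ Set.uIcc (-z) (0:ℝ), HasDerivAt (fun t : ℝ => t - t ^ 3 / 6 + t ^ 5 / 20)
        (1 - t ^ 2 / 2 + t ^ 4 / 4) t := by
      intro t _
      have h := ((hasDerivAt_id t).sub ((hasDerivAt_pow 3 t).div_const 6)).add
        ((hasDerivAt_pow 5 t).div_const 20)
      convert h using 1
      · rfl
      · rfl
      · funext x; rfl
      · push_cast; ring
    rw [intervalIntegral.integral_eq_sub_of_hasDerivAt hF
      ((by continuity : Continuous fun t : ℝ => 1 - t ^ 2 / 2 + t ^ 4 / 4).intervalIntegrable _ _)]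
    ring
  have hc : (0:ℝ) ≤ (Real.sqrt (2 * Real.pi))⁻¹ := inv_nonneg.2 sqrt2pi_pos.le
  have := mul_le_mul_of_nonneg_left (hcomp ▸ hmono) hc
  rw [stdNormalCDF_zero] at hdiff
  linarith

lemma poly_nonneg {z : ℝ} (h0 : 0 ≤ z) (h1 : z ≤ 1) : 0 ≤ z - z ^ 3 / 6 + z ^ 5 / 20 := by
  nlinarith [pow_le_one₀ h0 h1 (n := 3), pow_nonneg h0 5]

lemma sup_term_le {z : ℝ} (hz : 0 < z) : |1 / (1 + z ^ 2) - stdNormalCDF (-z)| ≤ 0.541 := by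
  have hA0 : (0:ℝ) ≤ 1 / (1 + z ^ 2) := by positivity
  have hB0 := stdNormalCDF_nonneg (-z)
  have hBh := stdNormalCDF_neg_le_half z hz.le
  rw [abs_le]
  constructor
  · linarith
  rcases le_or_gt z 1 with h1 | h1
  · have hp := phi_lower hz.le
    have hpn := poly_nonneg hz.le h1
    have hcp : (Real.sqrt (2 * Real.pi))⁻¹ * (z - z ^ 3 / 6 + z ^ 5 / 20)
        ≤ 0.39895 * (z - z ^ 3 / 6 + z ^ 5 / 20) :=
      mul_le_mul_of_nonneg_right sqrt2pi_inv_le hpn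
    have hkey : 1 / (1 + z ^ 2) ≤ 1.041 - 0.39895 * (z - z ^ 3 / 6 + z ^ 5 / 20) := by
      rw [div_le_iff₀ (by positivity)]
      nlinarith [sq_nonneg (z - 0.2135), sq_nonneg (z*(z - 0.2135)), sq_nonneg (z^2*(z-0.2135)),
        mul_nonneg hz.le hz.le, mul_nonneg (mul_nonneg hz.le hz.le) hz.le, sq_nonneg z,
        sq_nonneg (1-z), mul_nonneg (sub_nonneg.2 h1) hz.le, sq_nonneg (z^2*(1-z)),
        mul_nonneg (mul_nonneg (sub_nonneg.2 h1) hz.le) hz.le]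
    linarith
  · have : 1 / (1 + z ^ 2) ≤ 1 / 2 := by
      rw [div_le_div_iff₀ (by positivity) (by norm_num)]
      nlinarith
    linarith

lemma sup_term_ge {z : ℝ} (hz : 0 < z) (h1 : z ≤ 1) :
    1 / 2 - z ^ 2 ≤ |1 / (1 + z ^ 2) - stdNormalCDF (-z)| := by
  have hBh := stdNormalCDF_neg_le_half z hz.le
  have hA : 1 - z ^ 2 ≤ 1 / (1 + z ^ 2) := by
    rw [le_div_iff₀ (by positivity)]
    nlinarith
  calc 1 / 2 - z ^ 2 ≤ 1 / (1 + z ^ 2) - stdNormalCDF (-z) := by linarith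
    _ ≤ _ := le_abs_self _

lemma cantelli {Ω : Type*} [MeasureSpace Ω] [IsProbabilityMeasure (ℙ : Measure Ω)]
    {W : Ω → ℝ} (h2 : MemLp W 2 ℙ) (hmean : ∫ ω, W ω = 0) {t : ℝ} (ht : 0 < t) :
    (ℙ {ω | t ≤ W ω}).toReal ≤ (∫ ω, W ω ^ 2) / ((∫ ω, W ω ^ 2) + t ^ 2) := by
  set v := ∫ ω, W ω ^ 2 with hv
  have hv0 : 0 ≤ v := integral_nonneg fun ω => sq_nonneg _
  set u := v / t with hu
  have hu0 : 0 ≤ u := div_nonneg hv0 ht.le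
  have hintW : Integrable W ℙ := h2.integrable one_le_two
  have hintW2 : Integrable (fun ω => W ω ^ 2) ℙ := h2.integrable_sq
  have hf : Integrable (fun ω => (W ω + u) ^ 2) ℙ := by
    have h := (h2.add (memLp_const u)).integrable_sq
    simpa using h
  have hEf : ∫ ω, (W ω + u) ^ 2 = v + u ^ 2 := by
    have heq : ∀ ω, (W ω + u) ^ 2 = (W ω ^ 2 + 2 * u * W ω) + u ^ 2 := fun ω => by ring
    have hint1 : Integrable (fun ω => W ω ^ 2 + 2 * u * W ω) ℙ :=
      hintW2.add (hintW.const_mul (2 * u))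
    have hint2 : Integrable (fun ω => 2 * u * W ω) ℙ := hintW.const_mul (2 * u)
    simp_rw [heq]
    rw [integral_add hint1 (integrable_const _), integral_add hintW2 hint2,
      MeasureTheory.integral_const_mul, hmean, integral_const]
    simp [hv]
  have hsub : {ω | t ≤ W ω} ⊆ {ω | (t + u) ^ 2 ≤ (W ω + u) ^ 2} := by
    intro ω hω
    simp only [Set.mem_setOf_eq] at hω ⊢
    have h1 : t + u ≤ W ω + u := by linarith
    exact pow_le_pow_left₀ (by linarith) h1 2
  have hmarkov := mul_meas_ge_le_integral_of_nonneg (μ := ℙ)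
    (f := fun ω => (W ω + u) ^ 2) (Filter.Eventually.of_forall fun ω => sq_nonneg _)
    hf ((t + u) ^ 2)
  have hmono : (ℙ {ω | t ≤ W ω}).toReal ≤ (ℙ {ω | (t + u) ^ 2 ≤ (W ω + u) ^ 2}).toReal :=
    ENNReal.toReal_mono (measure_ne_top _ _) (measure_mono hsub)
  have htu : (0:ℝ) < (t + u) ^ 2 := by positivity
  have hstep : (ℙ {ω | t ≤ W ω}).toReal ≤ (v + u ^ 2) / (t + u) ^ 2 := by
    rw [le_div_iff₀ htu]
    calc (ℙ {ω | t ≤ W ω}).toReal * (t + u) ^ 2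
        ≤ (ℙ {ω | (t + u) ^ 2 ≤ (W ω + u) ^ 2}).toReal * (t + u) ^ 2 :=
          mul_le_mul_of_nonneg_right hmono htu.le
      _ ≤ v + u ^ 2 := by rw [mul_comm]; rw [hEf] at hmarkov; exact hmarkov
  have halg : (v + u ^ 2) / (t + u) ^ 2 = v / (v + t ^ 2) := by
    rw [hu]
    have ht' : t ≠ 0 := ht.ne'
    have h1 : v + t ^ 2 ≠ 0 := by positivity
    have h2 : t + v / t ≠ 0 := by positivity
    field_simp
    ring
  rw [halg] at hstep
  exact hstep

/-- for any square-integrable random variable `X` with positive variance,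
`sup_x |P((X − E X)/√(Var X) < x) − Φ(x)| ≤ sup_{z>0} |1/(1+z²) − Φ(−z)|`, and the latter
supremum is at most `0.541`. -/
theorem standardized_rv_normal_approx_bound
    {Ω : Type*} [MeasureSpace Ω] [IsProbabilityMeasure (ℙ : Measure Ω)]
    (X : Ω → ℝ) (hmeas : Measurable X) (hL2 : MemLp X 2 ℙ)
    (hvar : 0 < ∫ ω, (X ω - ∫ ω', X ω') ^ 2) :
    (∀ x : ℝ,
      |(ℙ {ω | (X ω - ∫ ω', X ω') / Real.sqrt (∫ ω'', (X ω'' - ∫ ω', X ω') ^ 2) < x}).toReal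
          - stdNormalCDF x|
        ≤ ⨆ z ∈ Set.Ioi (0 : ℝ), |1 / (1 + z ^ 2) - stdNormalCDF (-z)|) ∧
    (⨆ z ∈ Set.Ioi (0 : ℝ), |1 / (1 + z ^ 2) - stdNormalCDF (-z)|) ≤ 0.541 := by
  have hgle : ∀ z : ℝ,
      (⨆ _ : z ∈ Set.Ioi (0:ℝ), |1 / (1 + z ^ 2) - stdNormalCDF (-z)|) ≤ 0.541 := by
    intro z
    by_cases hz : z ∈ Set.Ioi (0:ℝ)
    · rw [ciSup_pos hz]; exact sup_term_le hz
    · rw [ciSup_neg hz, Real.sSup_empty]; norm_num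
  have hbdd : BddAbove (Set.range fun z : ℝ =>
      ⨆ _ : z ∈ Set.Ioi (0:ℝ), |1 / (1 + z ^ 2) - stdNormalCDF (-z)|) := by
    refine ⟨0.541, ?_⟩
    rintro y ⟨z, rfl⟩
    exact hgle z
  set S := ⨆ z ∈ Set.Ioi (0:ℝ), |1 / (1 + z ^ 2) - stdNormalCDF (-z)| with hSdef
  have hSle : S ≤ 0.541 := ciSup_le hgle
  have hgS : ∀ z : ℝ, 0 < z → |1 / (1 + z ^ 2) - stdNormalCDF (-z)| ≤ S := by
    intro z hz
    have h := le_ciSup hbdd z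
    rwa [ciSup_pos (Set.mem_Ioi.2 hz)] at h
  have hShalf : 1 / 2 ≤ S := by
    by_contra h
    push_neg at h
    set ε := 1 / 2 - S with hε
    have hε0 : 0 < ε := by rw [hε]; linarith
    set z := min 1 (Real.sqrt (ε / 2)) with hzdef
    have hz0 : 0 < z := lt_min one_pos (Real.sqrt_pos.2 (by linarith))
    have hz1 : z ≤ 1 := min_le_left _ _
    have hz2 : z ^ 2 ≤ ε / 2 := by
      have h1 : z ≤ Real.sqrt (ε / 2) := min_le_right _ _
      calc z ^ 2 ≤ Real.sqrt (ε / 2) ^ 2 := pow_le_pow_left₀ hz0.le h1 2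
        _ = ε / 2 := Real.sq_sqrt (by linarith)
    have := (sup_term_ge hz0 hz1).trans (hgS z hz0)
    linarith
  refine ⟨?_, hSle⟩
  intro x
  set μE := ∫ ω', X ω' with hμE
  set v := ∫ ω'', (X ω'' - μE) ^ 2 with hvdef
  set σ := Real.sqrt v with hσdef
  have hv0 : 0 < v := hvar
  have hσ : 0 < σ := Real.sqrt_pos.2 hv0
  have hσ2 : σ ^ 2 = v := Real.sq_sqrt hv0.le
  have hW2 : MemLp (fun ω => X ω - μE) 2 ℙ := hL2.sub (memLp_const μE)
  have hWmean : ∫ ω, X ω - μE = 0 := by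
    rw [integral_sub (hL2.integrable one_le_two) (integrable_const _), integral_const]
    simp [← hμE]
  have hveq : ∫ ω, (X ω - μE) ^ 2 = v := hvdef.symm
  have hP1 : ∀ s : Set Ω, (ℙ s).toReal ≤ 1 := by
    intro s
    have h := ENNReal.toReal_mono ENNReal.one_ne_top (prob_le_one (μ := ℙ) (s := s))
    simpa using h
  have hsetlt : {ω | (X ω - μE) / σ < x} = {ω | X ω - μE < x * σ} := by
    ext ω
    simp only [Set.mem_setOf_eq]
    rw [div_lt_iff₀ hσ]
  rw [hsetlt]
  have hΦ1 : stdNormalCDF x + stdNormalCDF (-x) = 1 := stdNormalCDF_add_neg x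
  rcases lt_trichotomy x 0 with hx | hx | hx
  · -- x < 0
    have ht0 : 0 < -x * σ := mul_pos (neg_pos.2 hx) hσ
    have hsub : {ω | X ω - μE < x * σ} ⊆ {ω | -x * σ ≤ -(X ω - μE)} := by
      intro ω hω
      simp only [Set.mem_setOf_eq] at hω ⊢
      nlinarith
    have hcant := cantelli (W := fun ω => -(X ω - μE)) (hW2.neg) (by
        rw [integral_neg]; simp [hWmean]) ht0
    simp only [neg_sq] at hcant
    rw [hveq] at hcant
    have halg : v / (v + (-x * σ) ^ 2) = 1 / (1 + x ^ 2) := by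
      rw [mul_pow, neg_pow, hσ2]
      field_simp
    rw [halg] at hcant
    have hmono : (ℙ {ω | X ω - μE < x * σ}).toReal
        ≤ (ℙ {ω | -x * σ ≤ -(X ω - μE)}).toReal :=
      ENNReal.toReal_mono (measure_ne_top _ _) (measure_mono hsub)
    have hgx := hgS (-x) (by linarith)
    have habs : 1 / (1 + (-x) ^ 2) - stdNormalCDF (-(-x))
        ≤ |1 / (1 + (-x) ^ 2) - stdNormalCDF (-(-x))| := le_abs_self _
    rw [neg_neg] at habs hgx
    have hxx : (-x) ^ 2 = x ^ 2 := by ring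
    rw [hxx] at habs hgx
    have hΦ0 : stdNormalCDF x ≤ 1 / 2 := by
      have := stdNormalCDF_mono hx.le
      rwa [stdNormalCDF_zero] at this
    have hΦnn := stdNormalCDF_nonneg x
    have hPnn : (0:ℝ) ≤ (ℙ {ω | X ω - μE < x * σ}).toReal := ENNReal.toReal_nonneg
    rw [abs_le]
    constructor <;> linarith
  · -- x = 0
    subst hx
    rw [stdNormalCDF_zero]
    have hPnn : (0:ℝ) ≤ (ℙ {ω | X ω - μE < 0 * σ}).toReal := ENNReal.toReal_nonneg
    have := hP1 {ω | X ω - μE < 0 * σ}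
    rw [abs_le]
    constructor <;> linarith
  · -- 0 < x
    have ht0 : 0 < x * σ := mul_pos hx hσ
    have hmeasAc : MeasurableSet {ω | x * σ ≤ X ω - μE} :=
      measurableSet_le measurable_const (hmeas.sub measurable_const)
    have hcompl : {ω | X ω - μE < x * σ} = {ω | x * σ ≤ X ω - μE}ᶜ := by
      ext ω
      simp [not_le]
    have hsum : (ℙ {ω | x * σ ≤ X ω - μE}).toReal
        + (ℙ {ω | X ω - μE < x * σ}).toReal = 1 := by
      have h := measure_add_measure_compl (μ := ℙ) hmeasAc
      rw [measure_univ] at h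
      have h2 := congrArg ENNReal.toReal h
      rw [ENNReal.toReal_add (measure_ne_top _ _) (measure_ne_top _ _),
        ENNReal.toReal_one] at h2
      rw [hcompl]
      exact h2
    have hcant := cantelli (W := fun ω => X ω - μE) hW2 hWmean ht0
    rw [hveq] at hcant
    have halg : v / (v + (x * σ) ^ 2) = 1 / (1 + x ^ 2) := by
      rw [mul_pow, hσ2]
      field_simp
    rw [halg] at hcant
    have hgx := hgS x hx
    have habs : 1 / (1 + x ^ 2) - stdNormalCDF (-x)
        ≤ |1 / (1 + x ^ 2) - stdNormalCDF (-x)| := le_abs_self _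
    have hΦh : stdNormalCDF (-x) ≤ 1 / 2 := stdNormalCDF_neg_le_half x hx.le
    have hΦnn := stdNormalCDF_nonneg (-x)
    have := hP1 {ω | X ω - μE < x * σ}
    rw [abs_le]
    constructor <;> linarith
end
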